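/- arXiv:2505.07739 — 2 statements merged into one kernel-verified Lean document; each statement's English description precedes it below -/
import Mathlib

section
/- Let T = k[x_1, x_2, x_3, …] be a polynomial ring in countably many variables over a field k, I the ideal generated by all x_i, and J' the ideal generated by x_1^2, x_2^2, x_3^2, …. Then M = T/J' is an I-torsion T-module, but F^(I)_0 M = 0 (no nonzero element of M is annihilated by all of I), hence M is not quite I-torsion. -/
open MvPolynomial

set_option synthInstance.maxHeartbeats 1000000
set_option maxHeartbeats 1000000

/-- The ordinal-indexed increasing filtration `F^(I)` on a `T`-module `M`:
`F^(I)_0 M = {m : I m = 0}` and `F^(I)_α M = {m : I m ⊆ ⋃_{β < α} F^(I)_β M}`. -/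
noncomputable def Ffilt (T : Type) [CommRing T] (I : Ideal T) (M : Type) [AddCommGroup M]
    [Module T M] : Ordinal.{0} → Set M :=
  WellFounded.fix Ordinal.lt_wf (C := fun _ => Set M) fun α F =>
    { m | ∀ s ∈ I, s • m = 0 ∨ ∃ β, ∃ h : β < α, s • m ∈ F β h }

/-- The ideal `I ⊆ k[x_1, x_2, …]` generated by all the variables. -/
noncomputable def varIdeal (k : Type) [Field k] : Ideal (MvPolynomial ℕ+ k) :=
  Ideal.span (Set.range (X : ℕ+ → MvPolynomial ℕ+ k))

/-- The ideal `J' ⊆ k[x_1, x_2, …]` generated by `x_1², x_2², x_3², …`. -/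
noncomputable def sqIdeal (k : Type) [Field k] : Ideal (MvPolynomial ℕ+ k) :=
  Ideal.span (Set.range fun i : ℕ+ => (X i : MvPolynomial ℕ+ k) ^ 2)

lemma Ffilt_eq (T : Type) [CommRing T] (I : Ideal T) (M : Type) [AddCommGroup M]
    [Module T M] (α : Ordinal.{0}) :
    Ffilt T I M α =
      { m | ∀ s ∈ I, s • m = 0 ∨ ∃ β, β < α ∧ s • m ∈ Ffilt T I M β } := by
  rw [Ffilt, WellFounded.fix_eq]
  simp only [exists_prop]

lemma mem_sqIdeal_iff {k : Type} [Field k] {p : MvPolynomial ℕ+ k} :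
    p ∈ sqIdeal k ↔ ∀ d ∈ p.support, ∃ i : ℕ+, 2 ≤ d i := by
  have h : sqIdeal k = Ideal.span ((fun s => monomial s (1 : k)) ''
      (Set.range fun i : ℕ+ => Finsupp.single i 2)) := by
    rw [sqIdeal, ← Set.range_comp]
    congr 1
    ext q
    simp [Function.comp, X_pow_eq_monomial]
  rw [h, mem_ideal_span_monomial_image]
  constructor
  · intro H d hd
    obtain ⟨si, ⟨i, rfl⟩, hle⟩ := H d hd
    exact ⟨i, by simpa using (Finsupp.single_le_iff.mp hle)⟩
  · intro H d hd
    obtain ⟨i, hi⟩ := H d hd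
    exact ⟨Finsupp.single i 2, ⟨i, rfl⟩, Finsupp.single_le_iff.mpr hi⟩

/-- Key lemma: no nonzero element of `T/J'` is killed by all of `I`. -/
lemma ann_eq_zero {k : Type} [Field k] (m : MvPolynomial ℕ+ k ⧸ sqIdeal k)
    (h : ∀ s ∈ varIdeal k, s • m = 0) : m = 0 := by
  obtain ⟨p, rfl⟩ := Ideal.Quotient.mk_surjective m
  rw [Ideal.Quotient.eq_zero_iff_mem, mem_sqIdeal_iff]
  by_contra hc
  push_neg at hc
  obtain ⟨d, hd, hsf⟩ := hc
  -- pick a fresh variable j not in the support of d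
  obtain ⟨j, hj⟩ := Finset.exists_notMem d.support
  have hXj : (X j : MvPolynomial ℕ+ k) ∈ varIdeal k :=
    Ideal.subset_span ⟨j, rfl⟩
  have h0 : (X j : MvPolynomial ℕ+ k) * p ∈ sqIdeal k := by
    have h1 : Ideal.Quotient.mk (sqIdeal k) ((X j : MvPolynomial ℕ+ k) * p) = 0 :=
      h (X j) hXj
    rwa [Ideal.Quotient.eq_zero_iff_mem] at h1
  rw [mem_sqIdeal_iff] at h0
  have hmem : Finsupp.single j 1 + d ∈ ((X j : MvPolynomial ℕ+ k) * p).support := by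
    rw [mem_support_iff, coeff_X_mul]
    exact mem_support_iff.mp hd
  obtain ⟨i, hi⟩ := h0 _ hmem
  have hdj : d j = 0 := Finsupp.notMem_support_iff.mp hj
  rw [Finsupp.add_apply, Finsupp.single_apply] at hi
  rcases eq_or_ne j i with rfl | hij
  · simp [hdj] at hi
  · rw [if_neg hij] at hi
    simp at hi
    exact absurd hi (not_le.mpr (hsf i))

lemma Ffilt_eq_zero {k : Type} [Field k] (α : Ordinal.{0}) :
    Ffilt (MvPolynomial ℕ+ k) (varIdeal k) (MvPolynomial ℕ+ k ⧸ sqIdeal k) α = {0} := by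
  induction α using Ordinal.induction with
  | h α ih =>
    rw [Ffilt_eq]
    ext m
    simp only [Set.mem_setOf_eq, Set.mem_singleton_iff]
    constructor
    · intro H
      refine ann_eq_zero m fun s hs => ?_
      rcases H s hs with h0 | ⟨β, hβ, hm⟩
      · exact h0
      · rwa [ih β hβ, Set.mem_singleton_iff] at hm
    · rintro rfl
      intro s _
      left
      exact smul_zero s

/-- Let `T = k[x_1, x_2, x_3, …]`, `I` the ideal generated by all the variables, and
`J'` the ideal generated by `x_1², x_2², x_3², …`. Then the `T`-module `M = T/J'` is
`I`-torsion, but `F^(I)_0 M = 0` (no nonzero element of `M` is annihilated by all of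
`I`), and hence `M` is not quite `I`-torsion. -/
theorem stmt8 (k : Type) [Field k] :
    (∀ s ∈ varIdeal k, ∀ m : MvPolynomial ℕ+ k ⧸ sqIdeal k,
      ∃ n : ℕ, s ^ (n + 1) • m = 0) ∧
    Ffilt (MvPolynomial ℕ+ k) (varIdeal k) (MvPolynomial ℕ+ k ⧸ sqIdeal k) 0 = {0} ∧
    ¬ (∀ m : MvPolynomial ℕ+ k ⧸ sqIdeal k, ∃ β : Ordinal.{0},
        m ∈ Ffilt (MvPolynomial ℕ+ k) (varIdeal k) (MvPolynomial ℕ+ k ⧸ sqIdeal k) β) := by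
  refine ⟨?_, Ffilt_eq_zero 0, ?_⟩
  · intro s hs m
    have hrad : s ∈ (sqIdeal k).radical := by
      refine Ideal.span_le.mpr ?_ hs
      rintro q ⟨i, rfl⟩
      exact ⟨2, Ideal.subset_span ⟨i, rfl⟩⟩
    obtain ⟨n, hn⟩ := hrad
    refine ⟨n, ?_⟩
    obtain ⟨p, rfl⟩ := Ideal.Quotient.mk_surjective m
    have : s ^ (n + 1) * p ∈ sqIdeal k := by
      rw [pow_succ', mul_assoc]
      exact Ideal.mul_mem_left _ _ (Ideal.mul_mem_right _ _ hn)
    calc s ^ (n + 1) • (Ideal.Quotient.mk (sqIdeal k) p)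
        = Ideal.Quotient.mk (sqIdeal k) (s ^ (n + 1) * p) := rfl
      _ = 0 := Ideal.Quotient.eq_zero_iff_mem.mpr this
  · intro H
    obtain ⟨β, hβ⟩ := H (Ideal.Quotient.mk (sqIdeal k) 1)
    rw [Ffilt_eq_zero β, Set.mem_singleton_iff, Ideal.Quotient.eq_zero_iff_mem,
      mem_sqIdeal_iff] at hβ
    obtain ⟨i, hi⟩ := hβ 0 (by simp [mem_support_iff])
    simp at hi
end

section
/- Let κ be an infinite regular cardinal, T a commutative ring, and I ⊂ T an ideal generated by fewer than κ elements. If M is a quite I-torsion T-module, then M = ⋃_{β<κ} F^(I)_β M; in particular F^(I)_κ M = ⋃_{β<κ} F^(I)_β M. -/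
section aux

variable {T : Type} [CommRing T] {I : Ideal T} {M : Type} [AddCommGroup M] [Module T M]

lemma Ffilt_mem_iff {α : Ordinal.{0}} {m : M} :
    m ∈ Ffilt T I M α ↔ ∀ s ∈ I, s • m = 0 ∨ ∃ β, β < α ∧ s • m ∈ Ffilt T I M β := by
  conv_lhs => rw [Ffilt, WellFounded.fix_eq]
  simp only [Set.mem_setOf_eq, exists_prop]
  rfl

lemma Ffilt_mono {α α' : Ordinal.{0}} (h : α ≤ α') :
    Ffilt T I M α ⊆ Ffilt T I M α' := by
  intro m hm
  rw [Ffilt_mem_iff] at hm ⊢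
  intro s hs
  rcases hm s hs with h0 | ⟨β, hβ, hmem⟩
  · exact Or.inl h0
  · exact Or.inr ⟨β, hβ.trans_le h, hmem⟩

lemma Ffilt_zero_mem (α : Ordinal.{0}) : (0 : M) ∈ Ffilt T I M α := by
  rw [Ffilt_mem_iff]
  intro s _
  exact Or.inl (smul_zero s)

lemma Ffilt_add_smul (α : Ordinal.{0}) :
    (∀ m m' : M, m ∈ Ffilt T I M α → m' ∈ Ffilt T I M α → m + m' ∈ Ffilt T I M α) ∧
    (∀ (t : T) (m : M), m ∈ Ffilt T I M α → t • m ∈ Ffilt T I M α) := by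
  induction α using Ordinal.induction with
  | h α IH =>
    constructor
    · intro m m' hm hm'
      rw [Ffilt_mem_iff] at hm hm' ⊢
      intro s hs
      have key : s • (m + m') = s • m + s • m' := smul_add s m m'
      rcases hm s hs with h0 | ⟨β, hβ, hmem⟩
      · rcases hm' s hs with h0' | ⟨β', hβ', hmem'⟩
        · exact Or.inl (by rw [key, h0, h0', add_zero])
        · exact Or.inr ⟨β', hβ', by rwa [key, h0, zero_add]⟩
      · rcases hm' s hs with h0' | ⟨β', hβ', hmem'⟩
        · exact Or.inr ⟨β, hβ, by rwa [key, h0', add_zero]⟩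
        · refine Or.inr ⟨max β β', max_lt hβ hβ', ?_⟩
          rw [key]
          exact (IH _ (max_lt hβ hβ')).1 _ _
            (Ffilt_mono (le_max_left β β') hmem)
            (Ffilt_mono (le_max_right β β') hmem')
    · intro t m hm
      rw [Ffilt_mem_iff] at hm ⊢
      intro s hs
      have key : s • (t • m) = t • (s • m) := smul_comm s t m
      rcases hm s hs with h0 | ⟨β, hβ, hmem⟩
      · exact Or.inl (by rw [key, h0, smul_zero])
      · exact Or.inr ⟨β, hβ, by rw [key]; exact (IH _ hβ).2 t _ hmem⟩

/-- `Ffilt T I M α` as a submodule. -/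
noncomputable def FfiltSub (T : Type) [CommRing T] (I : Ideal T) (M : Type) [AddCommGroup M]
    [Module T M] (α : Ordinal.{0}) : Submodule T M where
  carrier := Ffilt T I M α
  zero_mem' := Ffilt_zero_mem α
  add_mem' := fun hm hm' => (Ffilt_add_smul α).1 _ _ hm hm'
  smul_mem' := fun t _ hm => (Ffilt_add_smul α).2 t _ hm

lemma span_smul_mem {G : Set T} (hGI : I = Ideal.span G) {δ : Ordinal.{0}} {m : M}
    (hG : ∀ g ∈ G, g • m ∈ Ffilt T I M δ) :
    ∀ s ∈ I, s • m ∈ Ffilt T I M δ := by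
  intro s hs
  rw [hGI] at hs
  induction hs using Submodule.span_induction with
  | mem x hx => exact hG x hx
  | zero => rw [zero_smul]; exact Ffilt_zero_mem δ
  | add x y _ _ hx hy => rw [add_smul]; exact (FfiltSub T I M δ).add_mem hx hy
  | smul t x _ hx =>
      rw [smul_eq_mul, mul_smul]
      exact (FfiltSub T I M δ).smul_mem t hx

end aux

/-- If `κ` is an infinite regular cardinal, `I ⊆ T` is an ideal generated by fewer than
`κ` elements, and `M` is a quite `I`-torsion `T`-module, then
`M = ⋃_{β < κ} F^(I)_β M`; in particular `F^(I)_κ M = ⋃_{β < κ} F^(I)_β M`. -/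
theorem stmt16 (κ : Cardinal.{0}) (hreg : κ.IsRegular)
    (T : Type) [CommRing T] (I : Ideal T)
    (G : Set T) (hGI : I = Ideal.span G) (hGκ : Cardinal.mk G < κ)
    (M : Type) [AddCommGroup M] [Module T M]
    (hM : ∀ m : M, ∃ β : Ordinal.{0}, m ∈ Ffilt T I M β) :
    (∀ m : M, ∃ β < κ.ord, m ∈ Ffilt T I M β) ∧
    Ffilt T I M κ.ord = ⋃ (β : Ordinal.{0}) (_ : β < κ.ord), Ffilt T I M β := by
  have hlim : Order.IsSuccLimit κ.ord := Cardinal.isSuccLimit_ord hreg.aleph0_le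
  have key : ∀ (β : Ordinal.{0}) (m : M), m ∈ Ffilt T I M β →
      ∃ β' < κ.ord, m ∈ Ffilt T I M β' := by
    intro β
    induction β using Ordinal.induction with
    | h β IH =>
      intro m hm
      rw [Ffilt_mem_iff] at hm
      have hchoice : ∀ g : G, ∃ γ < κ.ord, (g : T) • m ∈ Ffilt T I M γ := by
        intro g
        have hgI : (g : T) ∈ I := hGI ▸ Ideal.subset_span g.2
        rcases hm g hgI with h0 | ⟨γ, hγ, hmem⟩
        · refine ⟨0, hlim.pos, ?_⟩
          rw [h0]
          exact Ffilt_zero_mem 0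
        · exact IH γ hγ _ hmem
      choose f hf hmemf using hchoice
      have hδ : iSup f < κ.ord := Cardinal.iSup_lt_ord_of_isRegular hreg hGκ hf
      set δ := iSup f with hδdef
      refine ⟨δ + 1, hlim.succ_lt hδ, ?_⟩
      rw [Ffilt_mem_iff]
      intro s hs
      refine Or.inr ⟨δ, Order.lt_succ δ, ?_⟩
      refine span_smul_mem hGI ?_ s hs
      intro g hg
      exact Ffilt_mono (le_ciSup (Ordinal.bddAbove_range f) ⟨g, hg⟩) (hmemf ⟨g, hg⟩)
  have part1 : ∀ m : M, ∃ β < κ.ord, m ∈ Ffilt T I M β := by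
    intro m
    obtain ⟨β, hβ⟩ := hM m
    exact key β m hβ
  refine ⟨part1, ?_⟩
  ext m
  simp only [Set.mem_iUnion]
  constructor
  · intro hm
    obtain ⟨β, hβ, hmem⟩ := part1 m
    exact ⟨β, hβ, hmem⟩
  · rintro ⟨β, hβ, hmem⟩
    exact Ffilt_mono hβ.le hmem
end
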